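/- Let n ≥ 1, weights w_i > 0, exponents p_i ≥ 1, B = {i : p_i = 1} nonempty, and let S: ℝ → ℝ denote the generalized thresholding function S_{(w₁,…,w_n),(p₁,…,p_n)} given by: S(t) = 0 for |t| ≤ T := (Σ_{i∈B} w_i)/2, S(t) = F₁^{-1}(t) for t > T, and S(t) = F₂^{-1}(t) for t < -T, where F₁(x) = x + (Σ_{i∈B} w_i + Σ_{i∉B} p_i w_i x^{p_i-1})/2 for x > 0 and F₂(x) = x - (Σ_{i∈B} w_i + Σ_{i∉B} p_i w_i |x|^{p_i-1})/2 for x < 0. Then S is nonexpansive: |S(x) - S(x')| ≤ |x - x'| for all x, x' ∈ ℝ. -/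

import Mathlib

open scoped Classical

/-- Nonexpansiveness of the generalized thresholding function
`S_{(w₁,…,w_n),(p₁,…,p_n)}` when `B = {i : p_i = 1}` is nonempty: `S(t) = 0` for
`|t| ≤ T = (Σ_{i∈B} w_i)/2`, `S = F₁⁻¹` on `(T,∞)` and `S = F₂⁻¹` on `(-∞,-T)`. -/
theorem stmt_19 {n : ℕ} (hn : 1 ≤ n) (w p : Fin n → ℝ)
    (hw : ∀ i, 0 < w i) (hp : ∀ i, 1 ≤ p i)
    (B : Finset (Fin n)) (hB : B = Finset.univ.filter (fun i => p i = 1))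
    (hBne : B.Nonempty)
    (T : ℝ) (hT : T = (∑ i ∈ B, w i) / 2)
    (F₁ F₂ S : ℝ → ℝ)
    (hF₁ : ∀ x > (0 : ℝ),
      F₁ x = x + ((∑ i ∈ B, w i) + ∑ i ∈ Bᶜ, p i * w i * x ^ (p i - 1)) / 2)
    (hF₂ : ∀ x < (0 : ℝ),
      F₂ x = x - ((∑ i ∈ B, w i) + ∑ i ∈ Bᶜ, p i * w i * |x| ^ (p i - 1)) / 2)
    (hS0 : ∀ t : ℝ, |t| ≤ T → S t = 0)
    (hSpos : ∀ t : ℝ, T < t → 0 < S t ∧ F₁ (S t) = t)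
    (hSneg : ∀ t : ℝ, t < -T → S t < 0 ∧ F₂ (S t) = t) :
    ∀ x x' : ℝ, |S x - S x'| ≤ |x - x'| := by
  have hT0 : 0 < T := by
    rw [hT]
    have : 0 < ∑ i ∈ B, w i := Finset.sum_pos (fun i _ => hw i) hBne
    linarith
  -- sums are nonneg
  have hsum₁ : ∀ x : ℝ, 0 < x → 0 ≤ ∑ i ∈ Bᶜ, p i * w i * x ^ (p i - 1) := by
    intro x hx
    apply Finset.sum_nonneg
    intro i _
    have h1 : (0:ℝ) ≤ x ^ (p i - 1) := Real.rpow_nonneg hx.le _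
    have := hw i; have := hp i
    positivity
  have hF₁low : ∀ x : ℝ, 0 < x → x + T ≤ F₁ x := by
    intro x hx
    rw [hF₁ x hx, hT]
    linarith [hsum₁ x hx]
  have hF₂high : ∀ x : ℝ, x < 0 → F₂ x ≤ x - T := by
    intro x hx
    rw [hF₂ x hx, hT]
    have h : 0 ≤ ∑ i ∈ Bᶜ, p i * w i * |x| ^ (p i - 1) := by
      apply Finset.sum_nonneg
      intro i _
      have h1 : (0:ℝ) ≤ |x| ^ (p i - 1) := Real.rpow_nonneg (abs_nonneg x) _
      have := hw i; have := hp i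
      positivity
    linarith
  have hF₁mono : ∀ x y : ℝ, 0 < x → x ≤ y → y - x ≤ F₁ y - F₁ x := by
    intro x y hx hxy
    have hy : 0 < y := lt_of_lt_of_le hx hxy
    rw [hF₁ x hx, hF₁ y hy]
    have hs : ∑ i ∈ Bᶜ, p i * w i * x ^ (p i - 1) ≤
        ∑ i ∈ Bᶜ, p i * w i * y ^ (p i - 1) := by
      apply Finset.sum_le_sum
      intro i _
      have he : (0:ℝ) ≤ p i - 1 := by linarith [hp i]
      have h1 : x ^ (p i - 1) ≤ y ^ (p i - 1) := Real.rpow_le_rpow hx.le hxy he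
      have hpw : (0:ℝ) ≤ p i * w i := by nlinarith [hw i, hp i]
      nlinarith
    linarith
  have hF₂mono : ∀ x y : ℝ, x ≤ y → y < 0 → y - x ≤ F₂ y - F₂ x := by
    intro x y hxy hy
    have hx : x < 0 := lt_of_le_of_lt hxy hy
    rw [hF₂ x hx, hF₂ y hy]
    have hs : ∑ i ∈ Bᶜ, p i * w i * |y| ^ (p i - 1) ≤
        ∑ i ∈ Bᶜ, p i * w i * |x| ^ (p i - 1) := by
      apply Finset.sum_le_sum
      intro i _
      have he : (0:ℝ) ≤ p i - 1 := by linarith [hp i]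
      have hay : |y| ≤ |x| := by
        rw [abs_of_neg hx, abs_of_neg hy]; linarith
      have h1 : |y| ^ (p i - 1) ≤ |x| ^ (p i - 1) :=
        Real.rpow_le_rpow (abs_nonneg y) hay he
      have hpw : (0:ℝ) ≤ p i * w i := by nlinarith [hw i, hp i]
      nlinarith
    linarith
  -- key: monotonicity and nonexpansiveness for ordered pairs
  have key : ∀ a b : ℝ, a ≤ b → S b - S a ≤ b - a ∧ S a ≤ S b := by
    intro a b hab
    by_cases hbT : T < b
    · obtain ⟨hSb, hFb⟩ := hSpos b hbT
      by_cases haT : T < a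
      · obtain ⟨hSa, hFa⟩ := hSpos a haT
        have hm : S a ≤ S b := by
          by_contra h
          push_neg at h
          have := hF₁mono (S b) (S a) hSb h.le
          rw [hFa, hFb] at this
          linarith
        have := hF₁mono (S a) (S b) hSa hm
        rw [hFa, hFb] at this
        exact ⟨by linarith, hm⟩
      · push_neg at haT
        by_cases haT' : -T ≤ a
        · have hSa0 : S a = 0 := hS0 a (abs_le.mpr ⟨haT', haT⟩)
          have hlow := hF₁low (S b) hSb
          rw [hFb] at hlow
          constructor
          · rw [hSa0]; linarith
          · rw [hSa0]; linarith
        · push_neg at haT'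
          obtain ⟨hSa, hFa⟩ := hSneg a haT'
          have h1 := hF₁low (S b) hSb
          rw [hFb] at h1
          have h2 := hF₂high (S a) hSa
          rw [hFa] at h2
          exact ⟨by linarith, by linarith⟩
    · push_neg at hbT
      by_cases hbT' : -T ≤ b
      · have hSb0 : S b = 0 := hS0 b (abs_le.mpr ⟨hbT', hbT⟩)
        by_cases haT' : -T ≤ a
        · have hSa0 : S a = 0 := hS0 a (abs_le.mpr ⟨haT', le_trans hab hbT⟩)
          rw [hSa0, hSb0]
          exact ⟨by linarith, le_refl 0⟩
        · push_neg at haT'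
          obtain ⟨hSa, hFa⟩ := hSneg a haT'
          have h2 := hF₂high (S a) hSa
          rw [hFa] at h2
          rw [hSb0]
          exact ⟨by linarith, by linarith⟩
      · push_neg at hbT'
        have haT' : a < -T := lt_of_le_of_lt hab hbT'
        obtain ⟨hSb, hFb⟩ := hSneg b hbT'
        obtain ⟨hSa, hFa⟩ := hSneg a haT'
        have hm : S a ≤ S b := by
          by_contra h
          push_neg at h
          have := hF₂mono (S b) (S a) h.le hSa
          rw [hFa, hFb] at this
          linarith
        have := hF₂mono (S a) (S b) hm hSb
        rw [hFa, hFb] at this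
        exact ⟨by linarith, hm⟩
  intro x x'
  rcases le_total x x' with h | h
  · obtain ⟨h1, h2⟩ := key x x' h
    rw [abs_le]
    constructor <;> [skip; skip] <;>
      cases abs_cases (x - x') with
      | inl hc => linarith [hc.1]
      | inr hc => linarith [hc.1]
  · obtain ⟨h1, h2⟩ := key x' x h
    rw [abs_le]
    constructor <;> [skip; skip] <;>
      cases abs_cases (x - x') with
      | inl hc => linarith [hc.1]
      | inr hc => linarith [hc.1]
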